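/- Let U be a valid, compatible subset of V(P) with |L(U)| > 2 such that |U(i)| ≠ 1 for every i. Then the intersection graph G_P(U) is disconnected (has at least two connected components). -/

import Mathlib

attribute [local instance] Classical.propDecidable

/-- A rooted phylogenetic tree on a finite species set, represented by its
(laminar) family of clusters, which contains the full leaf set and all
singletons.  By the classical correspondence, such families are exactly the
cluster sets of rooted phylogenetic trees (internal nodes with ≥ 2 children). -/
structure PhyloTree (S : Type) [DecidableEq S] where
  leaves : Finset S
  clusters : Finset (Finset S)
  leaves_nonempty : leaves.Nonempty
  leaves_mem : leaves ∈ clusters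
  singleton_mem : ∀ x ∈ leaves, ({x} : Finset S) ∈ clusters
  subset_leaves : ∀ C ∈ clusters, C ⊆ leaves
  nonempty_mem : ∀ C ∈ clusters, C.Nonempty
  laminar : ∀ C ∈ clusters, ∀ D ∈ clusters, C ∩ D = ∅ ∨ C ⊆ D ∨ D ⊆ C

variable {S : Type} [DecidableEq S]

/-- Restriction of a family of clusters to a subset `A` of species:
`{C ∩ A : C ∈ H, C ∩ A ≠ ∅}`. -/
def restrictFam (H : Finset (Finset S)) (A : Finset S) : Finset (Finset S) :=
  (H.image (fun C => C ∩ A)).filter (fun C => C.Nonempty)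

/-- The cluster set of the restriction `T|A`. -/
def restrictClusters (T : PhyloTree S) (A : Finset S) : Finset (Finset S) :=
  restrictFam T.clusters A

/-- `T` displays `T'`: every cluster of `T'` is a cluster of `T|L(T')`. -/
def Displays (T T' : PhyloTree S) : Prop :=
  T'.clusters ⊆ restrictClusters T T'.leaves

/-- `T` induces the rooted triple `ab|c`: the restriction of `T` to `{a,b,c}`
is binary with `a,b` separated from `c`, i.e. `{a,b}` is a cluster of it. -/
def Triple (T : PhyloTree S) (a b c : S) : Prop :=
  a ∈ T.leaves ∧ b ∈ T.leaves ∧ c ∈ T.leaves ∧ a ≠ b ∧ a ≠ c ∧ b ≠ c ∧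
    ({a, b} : Finset S) ∈ restrictClusters T ({a, b, c} : Finset S)

/-- A node of the profile `P` is a pair `(i, C)` with `C` a cluster (= node) of `T i`. -/
def NodeOf {k : ℕ} (P : Fin k → PhyloTree S) (u : Fin k × Finset S) : Prop :=
  u.2 ∈ (P u.1).clusters

/-- `L(U)`: the union of the clusters of the nodes in `U`. -/
def LofU {k : ℕ} (U : Finset (Fin k × Finset S)) : Finset S :=
  U.sup (fun u => u.2)

/-- `U(i) = U ∩ V(T_i)`, as the set of clusters of the nodes of `U` in tree `i`. -/
def Ui {k : ℕ} (U : Finset (Fin k × Finset S)) (i : Fin k) : Finset (Finset S) :=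
  (U.filter (fun u => u.1 = i)).image (fun u => u.2)

/-- Node (cluster) `C` is a child of node (cluster) `D` in `T`. -/
def IsChild (T : PhyloTree S) (C D : Finset S) : Prop :=
  C ∈ T.clusters ∧ D ∈ T.clusters ∧ C ⊂ D ∧
    ∀ E ∈ T.clusters, C ⊂ E → E ⊂ D → False

/-- The set of children (clusters) of the node with cluster `C` in `T`. -/
noncomputable def ChildrenOf (T : PhyloTree S) (C : Finset S) : Finset (Finset S) :=
  T.clusters.filter (fun D => IsChild T D C)

/-- `U` is a valid (nonempty) subset of `V(P)`. -/
def Valid {k : ℕ} (P : Fin k → PhyloTree S) (U : Finset (Fin k × Finset S)) : Prop :=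
  U.Nonempty ∧
  (∀ u ∈ U, NodeOf P u) ∧
  (∀ i : Fin k, 2 ≤ (Ui U i).card →
    ∃ D ∈ (P i).clusters, ∀ C ∈ Ui U i, IsChild (P i) C D) ∧
  (∀ i : Fin k, (Ui U i).sup id = (P i).leaves ∩ LofU U)

/-- `U` is compatible: some tree on `L(U)` displays `T_i|L(U)` for every `i`. -/
def CompatU {k : ℕ} (P : Fin k → PhyloTree S) (U : Finset (Fin k × Finset S)) : Prop :=
  ∃ T : PhyloTree S, T.leaves = LofU U ∧
    ∀ i : Fin k, restrictClusters (P i) (LofU U) ⊆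
      restrictClusters T ((P i).leaves ∩ LofU U)

/-- The profile `P` is compatible: some tree on `L(P)` displays every `T_i`. -/
def CompatP {k : ℕ} (P : Fin k → PhyloTree S) : Prop :=
  ∃ T : PhyloTree S, T.leaves = Finset.univ.sup (fun i => (P i).leaves) ∧
    ∀ i : Fin k, Displays T (P i)

/-- Edge `(a,b)` of the triplet graph of the restricted profile `P|A`:
some restricted tree `T_i|A` induces a rooted triple `ab|c`. -/
def TGEdge {k : ℕ} (P : Fin k → PhyloTree S) (A : Finset S) (a b : S) : Prop :=
  a ≠ b ∧ ∃ i : Fin k, ∃ c : S, c ∈ (P i).leaves ∩ A ∧ c ≠ a ∧ c ≠ b ∧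
    ∃ C ∈ restrictClusters (P i) A, a ∈ C ∧ b ∈ C ∧ c ∉ C

/-- Adjacency (within `U`) of the intersection graph `G_P(U)`. -/
def GPadj {k : ℕ} (U : Finset (Fin k × Finset S))
    (u v : Fin k × Finset S) : Prop :=
  u ∈ U ∧ v ∈ U ∧ (u.2 ∩ v.2).Nonempty

/-- A "block" of `T`: a maximal proper cluster (child of the root). -/
def IsBlock (T : PhyloTree S) (E : Finset S) : Prop :=
  E ∈ T.clusters ∧ E ≠ T.leaves ∧
    ∀ F ∈ T.clusters, E ⊆ F → F = E ∨ F = T.leaves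

lemma mem_restrictClusters {T : PhyloTree S} {A C : Finset S} :
    C ∈ restrictClusters T A ↔ (∃ C' ∈ T.clusters, C' ∩ A = C) ∧ C.Nonempty := by
  simp only [restrictClusters, restrictFam, Finset.mem_filter, Finset.mem_image]

lemma exists_block (T : PhyloTree S) {C : Finset S} (hC : C ∈ T.clusters)
    (hne : C ≠ T.leaves) : ∃ E, IsBlock T E ∧ C ⊆ E := by
  classical
  set s := T.clusters.filter (fun F => C ⊆ F ∧ F ≠ T.leaves) with hs
  have hCs : C ∈ s := by simp [hs, hC, hne]
  obtain ⟨E, hEs, hmax⟩ := s.exists_max_image (fun F => F.card) ⟨C, hCs⟩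
  rw [hs, Finset.mem_filter] at hEs
  refine ⟨E, ⟨hEs.1, hEs.2.2, ?_⟩, hEs.2.1⟩
  intro F hF hEF
  by_cases hFl : F = T.leaves
  · exact Or.inr hFl
  · left
    have hFs : F ∈ s := by
      rw [hs, Finset.mem_filter]; exact ⟨hF, hEs.2.1.trans hEF, hFl⟩
    exact (Finset.eq_of_subset_of_card_le hEF (hmax F hFs)).symm

lemma blocks_disjoint {T : PhyloTree S} {E1 E2 : Finset S}
    (h1 : IsBlock T E1) (h2 : IsBlock T E2) (hne : E1 ≠ E2) : E1 ∩ E2 = ∅ := by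
  rcases T.laminar E1 h1.1 E2 h2.1 with h | h | h
  · exact h
  · rcases h1.2.2 E2 h2.1 h with h' | h'
    · exact absurd h'.symm hne
    · exact absurd h' h2.2.1
  · rcases h2.2.2 E1 h1.1 h with h' | h'
    · exact absurd h' hne
    · exact absurd h' h1.2.1

lemma children_disjoint {T : PhyloTree S} {C C2 D : Finset S}
    (h1 : IsChild T C D) (h2 : IsChild T C2 D) (hne : C ≠ C2) : C ∩ C2 = ∅ := by
  rcases T.laminar C h1.1 C2 h2.1 with h | h | h
  · exact h
  · exact (h1.2.2.2 C2 h2.1 (ssubset_of_subset_of_ne h hne) h2.2.2.1).elim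
  · exact (h2.2.2.2 C h1.1 (ssubset_of_subset_of_ne h hne.symm) h1.2.2.1).elim

/-- If `U` is valid and compatible, `|L(U)| > 2`, and
`|U(i)| ≠ 1` for every `i`, then the intersection graph `G_P(U)` is
disconnected. -/
theorem stmt11 {k : ℕ} (P : Fin k → PhyloTree S)
    (U : Finset (Fin k × Finset S)) (hU : Valid P U) (hC : CompatU P U)
    (hL : 2 < (LofU U).card)
    (hcard : ∀ i : Fin k, (Ui U i).card ≠ 1) :
    ∃ u ∈ U, ∃ v ∈ U, ¬ Relation.ReflTransGen (GPadj U) u v := by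
  classical
  obtain ⟨T, hTl, hTd⟩ := hC
  obtain ⟨hUne, hNode, hChild, hSup⟩ := hU
  -- every node of U has its cluster inside some block of T
  have key : ∀ w ∈ U, ∃ E, IsBlock T E ∧ w.2 ⊆ E := by
    intro w hw
    set i := w.1 with hi
    set C := w.2 with hCdef
    have hCU : C ∈ Ui U i := by
      apply Finset.mem_image_of_mem
      simp [Finset.mem_filter, hw, hi]
    have hCcl : C ∈ (P i).clusters := hNode w hw
    have hUi2 : 2 ≤ (Ui U i).card := by
      have h1 : 0 < (Ui U i).card := Finset.card_pos.mpr ⟨C, hCU⟩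
      have h2 := hcard i
      omega
    -- all clusters of U(i) are children of a common node D, hence pairwise disjoint
    obtain ⟨D, hD, hch⟩ := hChild i hUi2
    obtain ⟨C2, hC2U, hC2ne⟩ := Finset.exists_mem_ne (s := Ui U i) (by omega) C
    have hdisj : C ∩ C2 = ∅ :=
      children_disjoint (hch C hCU) (hch C2 hC2U) (Ne.symm hC2ne)
    have hC2ne' : C2.Nonempty := by
      rcases Finset.mem_image.mp hC2U with ⟨w2, hw2, rfl⟩
      exact (P i).nonempty_mem _ (by
        have := hNode w2 (Finset.mem_filter.mp hw2).1
        have h3 : w2.1 = i := (Finset.mem_filter.mp hw2).2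
        rwa [NodeOf, h3] at this)
    set A := (P i).leaves ∩ LofU U with hA
    have hsupA : (Ui U i).sup id = A := hSup i
    have hC2A : C2 ⊆ A := by
      rw [← hsupA]; exact Finset.le_sup (f := id) hC2U
    have hCL : C ⊆ LofU U := Finset.le_sup (f := fun u => u.2) hw
    have hCleaves : C ⊆ (P i).leaves := (P i).subset_leaves C hCcl
    have hCA : C ⊆ A := Finset.subset_inter hCleaves hCL
    -- C ≠ A since C2 ⊆ A is disjoint from C and nonempty
    have hCneA : C ≠ A := by
      intro h
      obtain ⟨t, ht⟩ := hC2ne'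
      have : t ∈ C ∩ C2 := Finset.mem_inter.mpr ⟨h ▸ hC2A ht, ht⟩
      rw [hdisj] at this
      exact absurd this (Finset.notMem_empty t)
    -- C is a restricted cluster of T
    have hCr : C ∈ restrictClusters (P i) (LofU U) := by
      rw [mem_restrictClusters]
      refine ⟨⟨C, hCcl, ?_⟩, (P i).nonempty_mem C hCcl⟩
      exact Finset.inter_eq_left.mpr hCL
    have hCr' := hTd i hCr
    rw [mem_restrictClusters] at hCr'
    obtain ⟨⟨C', hC'cl, hC'A⟩, _⟩ := hCr'
    have hC'ne : C' ≠ T.leaves := by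
      intro h
      apply hCneA
      rw [← hC'A, h, hTl]
      exact Finset.inter_eq_right.mpr (Finset.inter_subset_right)
    obtain ⟨E, hE, hC'E⟩ := exists_block T hC'cl hC'ne
    exact ⟨E, hE, by rw [← hC'A]; exact (Finset.inter_subset_left).trans hC'E⟩
  -- pick two leaves in different blocks
  have hLne : (LofU U).Nonempty := Finset.card_pos.mp (by omega)
  obtain ⟨x, hx⟩ := hLne
  obtain ⟨u, hu, hxu⟩ := Finset.mem_sup.mp (by rwa [LofU] at hx)
  obtain ⟨E1, hE1, huE1⟩ := key u hu
  have hE1L : E1 ⊆ LofU U := by rw [← hTl]; exact T.subset_leaves E1 hE1.1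
  have hE1ssL : E1 ⊂ LofU U := ssubset_of_subset_of_ne hE1L (by rw [← hTl]; exact hE1.2.1)
  obtain ⟨y, hyL, hyE1⟩ := Finset.exists_of_ssubset hE1ssL
  obtain ⟨v, hv, hyv⟩ := Finset.mem_sup.mp (by rwa [LofU] at hyL)
  refine ⟨u, hu, v, hv, ?_⟩
  intro hreach
  -- invariant: every node reachable from u has its cluster ⊆ E1
  have hinv : ∀ z, Relation.ReflTransGen (GPadj U) u z → z.2 ⊆ E1 := by
    intro z hz
    induction hz with
    | refl => exact huE1
    | tail _ hadj ih =>
      obtain ⟨_, hz'U, hne⟩ := hadj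
      obtain ⟨E', hE', hzE'⟩ := key _ hz'U
      obtain ⟨t, ht⟩ := hne
      rcases Finset.mem_inter.mp ht with ⟨ht1, ht2⟩
      by_cases hEE : E' = E1
      · exact hEE ▸ hzE'
      · exfalso
        have : t ∈ E1 ∩ E' := Finset.mem_inter.mpr ⟨ih ht1, hzE' ht2⟩
        rw [blocks_disjoint hE1 hE' (Ne.symm hEE)] at this
        exact absurd this (Finset.notMem_empty t)
  exact hyE1 (hinv v hreach hyv)
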